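/- Let M₀, ..., M_{k−1} be nonnegative supermartingales on binary strings of length at most n, each bounded by 2 on 2^{≤n}, with Σ_j M_j(ε) ≤ 1, and such that the average over σ ∈ 2^n of Σ_j M_j(σ) is at least 1 − ε₀. Let B̃₀, ..., B̃_m ⊆ 2^{≤n} be a sequence of prefix-free sets, each covering all of 2^ω (i.e., [B̃_t] = 2^ω), with B̃_{t+1} refining B̃_t (every element of B̃_{t+1} extends some element of B̃_t). For ρ ∈ B̃_{t}, let B̃_ρ = B̃_{t+1} ∩ [ρ]^⪯. Then Σ_{t<m} Σ_{ρ ∈ B̃_t} 2^{−|ρ|} · Var(M⃗ | B̃_ρ) ≤ C(k)·(1 + m·ε₀), where C(k) = 16k is an admissible constant and Var(M⃗ | B) denotes the conditional variance of the ℝ^k-valued function (M₀,...,M_{k−1}) on the prefix-free set B with respect to the normalized measure μ(·)/μ(B). -/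

import Mathlib

open Finset

noncomputable section

/-- Measure (weight) of a binary string. -/
def wt (σ : List Bool) : ℝ := ((2 : ℝ)⁻¹) ^ σ.length

/-- Measure of a finite set of binary strings. -/
def mea (B : Finset (List Bool)) : ℝ := ∑ σ ∈ B, wt σ

/-- Conditional average of `f` on the set `B` (w.r.t. normalized measure). -/
def condE (f : List Bool → ℝ) (B : Finset (List Bool)) : ℝ :=
  (∑ σ ∈ B, f σ * wt σ) / mea B

/-- Conditional variance of the `ℝ^k`-valued function `M⃗ = (M 0, …, M (k-1))` on `B`. -/
def vVar {k : ℕ} (M : Fin k → List Bool → ℝ) (B : Finset (List Bool)) : ℝ :=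
  (∑ σ ∈ B, (∑ j, (M j σ - condE (M j) B) ^ 2) * wt σ) / mea B

/-- `M` is a (nonnegative) supermartingale on binary strings. -/
def IsSuperM (M : List Bool → ℝ) : Prop :=
  (∀ σ, 0 ≤ M σ) ∧ ∀ σ, M (σ ++ [false]) + M (σ ++ [true]) ≤ 2 * M σ

/-- A set of strings is prefix-free: no element is a proper prefix of another. -/
def PrefixFree (B : Finset (List Bool)) : Prop :=
  ∀ σ ∈ B, ∀ τ ∈ B, σ <+: τ → σ = τ

lemma wt_pos (σ : List Bool) : 0 < wt σ := by unfold wt; positivity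

lemma wt_append_single (ρ : List Bool) (b : Bool) :
    wt (ρ ++ [b]) = (2⁻¹ : ℝ) * wt ρ := by
  simp [wt, pow_succ, mul_comm]

/-- Supermartingale inequality over a prefix-free set of extensions of `ρ`,
all of length ≤ `ρ.length + d`. -/
lemma superM_sum (M : List Bool → ℝ) (hM : IsSuperM M) :
    ∀ d (ρ : List Bool) (B : Finset (List Bool)), PrefixFree B →
    (∀ σ ∈ B, ρ <+: σ ∧ σ.length ≤ ρ.length + d) →
    ∑ σ ∈ B, M σ * wt σ ≤ M ρ * wt ρ := by
  intro d
  induction d with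
  | zero =>
    intro ρ B _ hB
    have hsub : B ⊆ {ρ} := by
      intro σ hσ
      obtain ⟨hpre, hl⟩ := hB σ hσ
      have : ρ = σ := hpre.eq_of_length (le_antisymm hpre.length_le (by simpa using hl))
      simp [← this]
    calc ∑ σ ∈ B, M σ * wt σ ≤ ∑ σ ∈ ({ρ} : Finset (List Bool)), M σ * wt σ := by
          apply Finset.sum_le_sum_of_subset_of_nonneg hsub
          intro σ _ _
          exact mul_nonneg (hM.1 σ) (wt_pos σ).le
      _ = M ρ * wt ρ := by simp
  | succ d ih =>
    intro ρ B hpf hB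
    by_cases hρ : ρ ∈ B
    · have hsub : B ⊆ {ρ} := by
        intro σ hσ
        have : ρ = σ := hpf ρ hρ σ hσ (hB σ hσ).1
        simp [← this]
      calc ∑ σ ∈ B, M σ * wt σ ≤ ∑ σ ∈ ({ρ} : Finset (List Bool)), M σ * wt σ := by
            apply Finset.sum_le_sum_of_subset_of_nonneg hsub
            intro σ _ _
            exact mul_nonneg (hM.1 σ) (wt_pos σ).le
        _ = M ρ * wt ρ := by simp
    · -- split by next bit
      have hext : ∀ σ ∈ B, ∃ b, ρ ++ [b] <+: σ := by
        intro σ hσ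
        obtain ⟨⟨rest, hrest⟩, _⟩ := hB σ hσ
        match rest, hrest with
        | [], h =>
          have heq : ρ = σ := by simpa using h
          exact absurd (heq ▸ hσ) hρ
        | b :: rest', h => exact ⟨b, ⟨rest', by simpa using h⟩⟩
      have hnotboth : ∀ σ, ¬(ρ ++ [false] <+: σ ∧ ρ ++ [true] <+: σ) := by
        rintro σ ⟨h0, h1⟩
        have := (List.prefix_or_prefix_of_prefix h0 h1).elim
          (fun h => h.eq_of_length (by simp)) (fun h => (h.eq_of_length (by simp)).symm)
        simpa using List.append_inj_right this rfl
      have hsplit : ∑ σ ∈ B, M σ * wt σ =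
          (∑ σ ∈ B.filter (fun σ => ρ ++ [false] <+: σ), M σ * wt σ) +
          ∑ σ ∈ B.filter (fun σ => ρ ++ [true] <+: σ), M σ * wt σ := by
        rw [← Finset.sum_filter_add_sum_filter_not B (fun σ => ρ ++ [false] <+: σ)]
        congr 1
        apply Finset.sum_congr _ (fun _ _ => rfl)
        ext σ
        simp only [Finset.mem_filter]
        constructor
        · rintro ⟨hσ, hn⟩
          refine ⟨hσ, ?_⟩
          rcases hext σ hσ with ⟨b, hb⟩
          cases b
          · exact absurd hb hn
          · exact hb
        · rintro ⟨hσ, h1⟩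
          exact ⟨hσ, fun h0 => hnotboth σ ⟨h0, h1⟩⟩
      have key : ∀ b : Bool, ∑ σ ∈ B.filter (fun σ => ρ ++ [b] <+: σ), M σ * wt σ ≤
          M (ρ ++ [b]) * wt (ρ ++ [b]) := by
        intro b
        apply ih (ρ ++ [b])
        · intro σ hσ τ hτ h
          exact hpf σ (Finset.mem_filter.1 hσ).1 τ (Finset.mem_filter.1 hτ).1 h
        · intro σ hσ
          rcases Finset.mem_filter.1 hσ with ⟨hσB, hpre⟩
          refine ⟨hpre, ?_⟩
          have := (hB σ hσB).2
          simp only [List.length_append, List.length_cons, List.length_nil] at *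
          omega
      calc ∑ σ ∈ B, M σ * wt σ ≤
            M (ρ ++ [false]) * wt (ρ ++ [false]) + M (ρ ++ [true]) * wt (ρ ++ [true]) := by
            rw [hsplit]; exact add_le_add (key false) (key true)
        _ = (M (ρ ++ [false]) + M (ρ ++ [true])) * ((2⁻¹ : ℝ) * wt ρ) := by
            rw [wt_append_single, wt_append_single]; ring
        _ ≤ (2 * M ρ) * ((2⁻¹ : ℝ) * wt ρ) := by
            exact mul_le_mul_of_nonneg_right (hM.2 ρ)
              (mul_nonneg (by norm_num) (wt_pos ρ).le)
        _ = M ρ * wt ρ := by ring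

lemma one_superM : IsSuperM (fun _ => 1) := ⟨fun _ => zero_le_one, fun _ => by norm_num⟩

/-- Kraft inequality. -/
lemma kraft (ρ : List Bool) (B : Finset (List Bool)) (hpf : PrefixFree B)
    (h : ∀ σ ∈ B, ρ <+: σ ∧ σ.length ≤ ρ.length + d) : mea B ≤ wt ρ := by
  have := superM_sum (fun _ => 1) one_superM d ρ B hpf h
  simpa [mea] using this

lemma notboth (ρ σ : List Bool) : ¬(ρ ++ [false] <+: σ ∧ ρ ++ [true] <+: σ) := by
  rintro ⟨h0, h1⟩
  have := (List.prefix_or_prefix_of_prefix h0 h1).elim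
    (fun h => h.eq_of_length (by simp)) (fun h => (h.eq_of_length (by simp)).symm)
  simpa using List.append_inj_right this rfl

lemma sum_split_pair (B : Finset (List Bool)) (ρ : List Bool)
    (hρ : ∀ σ ∈ B, ∃ b, ρ ++ [b] <+: σ) (g : List Bool → ℝ) :
    ∑ σ ∈ B, g σ = (∑ σ ∈ B.filter (fun σ => ρ ++ [false] <+: σ), g σ) +
      ∑ σ ∈ B.filter (fun σ => ρ ++ [true] <+: σ), g σ := by
  rw [← Finset.sum_filter_add_sum_filter_not B (fun σ => ρ ++ [false] <+: σ)]
  congr 1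
  apply Finset.sum_congr _ (fun _ _ => rfl)
  ext σ
  simp only [Finset.mem_filter]
  constructor
  · rintro ⟨hσ, hn⟩
    refine ⟨hσ, ?_⟩
    rcases hρ σ hσ with ⟨b, hb⟩
    cases b
    · exact absurd hb hn
    · exact hb
  · rintro ⟨hσ, h1⟩
    exact ⟨hσ, fun h0 => notboth ρ σ ⟨h0, h1⟩⟩

/-- Lower bound for the mass of a supermartingale on a full prefix-free cover. -/
lemma level_bound (M : List Bool → ℝ) (hM : IsSuperM M) :
    ∀ n (B : Finset (List Bool)), PrefixFree B → (∀ σ ∈ B, σ.length ≤ n) → mea B = 1 →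
    (∑ f : Fin n → Bool, M (List.ofFn f) * ((2:ℝ)⁻¹) ^ n) ≤ ∑ σ ∈ B, M σ * wt σ := by
  intro n
  induction n generalizing M with
  | zero =>
    intro B hpf hlen hmea
    have hsub : B ⊆ {[]} := by
      intro σ hσ
      simp [List.length_eq_zero_iff.1 (Nat.le_zero.1 (hlen σ hσ))]
    have hB : B = {[]} := by
      rcases Finset.subset_singleton_iff.1 hsub with h | h
      · rw [h] at hmea; simp [mea] at hmea
      · exact h
    subst hB
    simp [wt, List.ofFn_zero]
  | succ n ih =>
    intro B hpf hlen hmea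
    by_cases h0 : ([] : List Bool) ∈ B
    · have hB : B = {[]} := by
        apply Finset.eq_singleton_iff_unique_mem.2
        exact ⟨h0, fun σ hσ => (hpf [] h0 σ hσ (List.nil_prefix)).symm⟩
      subst hB
      have himg : ∑ σ ∈ (Finset.univ : Finset (Fin (n+1) → Bool)).image List.ofFn,
          M σ * wt σ = ∑ f : Fin (n+1) → Bool, M (List.ofFn f) * ((2:ℝ)⁻¹) ^ (n+1) := by
        rw [Finset.sum_image (fun x _ y _ h => List.ofFn_injective h)]
        apply Finset.sum_congr rfl
        intro f _
        simp [wt]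
      have := superM_sum M hM (n+1) []
        ((Finset.univ : Finset (Fin (n+1) → Bool)).image List.ofFn)
        (by
          intro σ hσ τ hτ hpre
          rcases Finset.mem_image.1 hσ with ⟨f, _, rfl⟩
          rcases Finset.mem_image.1 hτ with ⟨g, _, rfl⟩
          exact hpre.eq_of_length (by simp))
        (by
          intro σ hσ
          rcases Finset.mem_image.1 hσ with ⟨f, _, rfl⟩
          exact ⟨List.nil_prefix, by simp⟩)
      rw [himg] at this
      simpa [wt] using this
    · -- no empty string: split by first bit
      have hne : ∀ σ ∈ B, ∃ b, [b] <+: σ := by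
        intro σ hσ
        match σ, hσ with
        | [], hσ => exact absurd hσ h0
        | b :: σ', _ => exact ⟨b, ⟨σ', rfl⟩⟩
      set Bf := fun b => B.filter (fun σ => [b] <+: σ) with hBfdef
      have hsplitg : ∀ g : List Bool → ℝ,
          ∑ σ ∈ B, g σ = (∑ σ ∈ Bf false, g σ) + ∑ σ ∈ Bf true, g σ := by
        intro g
        have := sum_split_pair B [] (by simpa using hne) g
        simpa using this
      have hcons : ∀ b σ, σ ∈ Bf b → b :: σ.tail = σ := by
        intro b σ hσ
        rcases Finset.mem_filter.1 hσ with ⟨_, ⟨r, hr⟩⟩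
        simp [← hr]
      have htail : ∀ (b : Bool) (g : List Bool → ℝ),
          ∑ τ ∈ (Bf b).image List.tail, g (b :: τ) = ∑ σ ∈ Bf b, g σ := by
        intro b g
        rw [Finset.sum_image (fun σ hσ σ' hσ' h => by
          rw [← hcons b σ hσ, ← hcons b σ' hσ', h])]
        exact Finset.sum_congr rfl (fun σ hσ => by rw [hcons b σ hσ])
      have hpfb : ∀ b, PrefixFree (Bf b) := by
        intro b σ hσ τ hτ h
        exact hpf σ (Finset.mem_filter.1 hσ).1 τ (Finset.mem_filter.1 hτ).1 h
      have hkraftb : ∀ b, mea (Bf b) ≤ 2⁻¹ := by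
        intro b
        have := kraft (d := n) [b] (Bf b) (hpfb b) (fun σ hσ =>
          ⟨(Finset.mem_filter.1 hσ).2, by
            have := hlen σ (Finset.mem_filter.1 hσ).1
            simp only [List.length_cons, List.length_nil]
            omega⟩)
        simpa [wt] using this
      have hsum2 : mea (Bf false) + mea (Bf true) = 1 := by
        rw [← hmea]; exact (hsplitg wt).symm
      have hmeab : ∀ b, mea (Bf b) = 2⁻¹ := by
        have h1 := hkraftb false
        have h2 := hkraftb true
        intro b
        cases b
        · linarith
        · linarith
      -- the tail sets
      have hmemC : ∀ b τ, τ ∈ (Bf b).image List.tail → (b :: τ) ∈ Bf b := by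
        intro b τ h
        rcases Finset.mem_image.1 h with ⟨σ, hσ, rfl⟩
        rw [hcons b σ hσ]; exact hσ
      have hpfC : ∀ b, PrefixFree ((Bf b).image List.tail) := by
        intro b τ hτ τ' hτ' h
        have h2 : (b :: τ) <+: (b :: τ') := by
          rcases h with ⟨r, hr⟩; exact ⟨r, by simp [← hr]⟩
        have := hpf (b :: τ) (Finset.mem_filter.1 (hmemC b τ hτ)).1
          (b :: τ') (Finset.mem_filter.1 (hmemC b τ' hτ')).1 h2
        exact List.tail_eq_of_cons_eq this
      have hlenC : ∀ b, ∀ τ ∈ (Bf b).image List.tail, τ.length ≤ n := by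
        intro b τ hτ
        have := hlen (b :: τ) (Finset.mem_filter.1 (hmemC b τ hτ)).1
        simpa using this
      have hwtC : ∀ (b : Bool) (τ : List Bool), wt τ = 2 * wt (b :: τ) := by
        intro b τ
        simp [wt, pow_succ]
        ring
      have hmeaC : ∀ b, mea ((Bf b).image List.tail) = 1 := by
        intro b
        have : mea ((Bf b).image List.tail) = ∑ τ ∈ (Bf b).image List.tail,
            (fun σ => 2 * wt σ) (b :: τ) := by
          apply Finset.sum_congr rfl
          intro τ _
          exact hwtC b τ
        rw [this, htail b (fun σ => 2 * wt σ), ← Finset.mul_sum]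
        have : ∑ σ ∈ Bf b, wt σ = mea (Bf b) := rfl
        rw [this, hmeab b]
        norm_num
      have hMb : ∀ b : Bool, IsSuperM (fun τ => M (b :: τ)) := by
        intro b
        refine ⟨fun τ => hM.1 _, fun τ => ?_⟩
        have := hM.2 (b :: τ)
        simpa using this
      have hihb : ∀ b : Bool, (∑ g : Fin n → Bool, M (b :: List.ofFn g) * ((2:ℝ)⁻¹) ^ n)
          ≤ 2 * ∑ σ ∈ Bf b, M σ * wt σ := by
        intro b
        have h1 := ih (fun τ => M (b :: τ)) (hMb b) ((Bf b).image List.tail)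
          (hpfC b) (hlenC b) (hmeaC b)
        have h2 : ∑ τ ∈ (Bf b).image List.tail, M (b :: τ) * wt τ
            = ∑ σ ∈ Bf b, (fun σ => 2 * (M σ * wt σ)) σ := by
          rw [← htail b (fun σ => 2 * (M σ * wt σ))]
          apply Finset.sum_congr rfl
          intro τ _
          rw [hwtC b τ]
          ring
        rw [h2, ← Finset.mul_sum] at h1
        exact h1
      -- split the LHS sum by the first coordinate
      have hofFn : ∀ (b : Bool) (g : Fin n → Bool),
          List.ofFn (Fin.cons b g : Fin (n+1) → Bool) = b :: List.ofFn g := by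
        intro b g
        simp [List.ofFn_succ]
      have hLHS : (∑ f : Fin (n+1) → Bool, M (List.ofFn f) * ((2:ℝ)⁻¹) ^ (n+1))
          = 2⁻¹ * ((∑ g : Fin n → Bool, M (false :: List.ofFn g) * ((2:ℝ)⁻¹) ^ n)
            + ∑ g : Fin n → Bool, M (true :: List.ofFn g) * ((2:ℝ)⁻¹) ^ n) := by
        rw [← Fintype.sum_equiv (Fin.consEquiv (fun _ : Fin (n+1) => Bool))
          (fun p => M (List.ofFn (Fin.cons p.1 p.2 : Fin (n+1) → Bool)) * ((2:ℝ)⁻¹) ^ (n+1))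
          (fun f => M (List.ofFn f) * ((2:ℝ)⁻¹) ^ (n+1)) (fun p => rfl)]
        rw [Fintype.sum_prod_type, Fintype.sum_bool]
        simp only [hofFn]
        rw [mul_add, Finset.mul_sum, Finset.mul_sum, add_comm]
        congr 1 <;> · apply Finset.sum_congr rfl; intro g _; rw [pow_succ]; ring
      rw [hLHS, hsplitg (fun σ => M σ * wt σ)]
      have hf := hihb false
      have ht := hihb true
      nlinarith [hf, ht]

lemma mea_nonneg (B : Finset (List Bool)) : 0 ≤ mea B :=
  Finset.sum_nonneg (fun σ _ => (wt_pos σ).le)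

/-- The conditional mean minimizes the weighted quadratic deviation. -/
lemma var_min (B : Finset (List Bool)) (a : List Bool → ℝ) (c : ℝ) (hW : mea B ≠ 0) :
    ∑ σ ∈ B, (a σ - condE a B) ^ 2 * wt σ ≤ ∑ σ ∈ B, (a σ - c) ^ 2 * wt σ := by
  set e := condE a B with he
  have hzero : ∑ σ ∈ B, (a σ - e) * wt σ = 0 := by
    have h1 : ∑ σ ∈ B, (a σ - e) * wt σ = (∑ σ ∈ B, a σ * wt σ) - e * mea B := by
      rw [Finset.sum_congr rfl (fun σ _ => by ring :
        ∀ σ ∈ B, (a σ - e) * wt σ = a σ * wt σ - e * wt σ)]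
      rw [Finset.sum_sub_distrib, ← Finset.mul_sum]
      rfl
    rw [h1, he, condE, div_mul_cancel₀ _ hW, sub_self]
  have hid : ∑ σ ∈ B, (a σ - c) ^ 2 * wt σ = (∑ σ ∈ B, (a σ - e) ^ 2 * wt σ)
      + (2 * (e - c)) * (∑ σ ∈ B, (a σ - e) * wt σ) + (e - c) ^ 2 * mea B := by
    have h : ∀ σ ∈ B, (a σ - c) ^ 2 * wt σ = (a σ - e) ^ 2 * wt σ
        + (2 * (e - c)) * ((a σ - e) * wt σ) + (e - c) ^ 2 * wt σ := fun σ _ => by ring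
    rw [Finset.sum_congr rfl h, Finset.sum_add_distrib, Finset.sum_add_distrib,
      ← Finset.mul_sum, ← Finset.mul_sum, mea]
  rw [hid, hzero, mul_zero, add_zero]
  have h2 : 0 ≤ (e - c) ^ 2 * mea B := mul_nonneg (sq_nonneg _) (mea_nonneg B)
  linarith

lemma fin_telescope (m : ℕ) (F : Fin (m + 1) → ℝ) :
    ∑ t : Fin m, (F t.succ - F t.castSucc) = F (Fin.last m) - F 0 := by
  have hq : ∀ i, min i m < m + 1 := fun i => Nat.lt_succ_of_le (min_le_right i m)
  set q : ℕ → ℝ := fun i => F ⟨min i m, hq i⟩ with hqdef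
  have h1 : ∀ t : Fin m, F t.succ - F t.castSucc = q (↑t + 1) - q ↑t := by
    intro t
    have ht := t.isLt
    have e1 : t.succ = (⟨min (↑t + 1) m, hq _⟩ : Fin (m+1)) := by
      apply Fin.ext; simp only [Fin.val_succ]; omega
    have e2 : t.castSucc = (⟨min (↑t : ℕ) m, hq _⟩ : Fin (m+1)) := by
      apply Fin.ext; simp only [Fin.coe_castSucc]; omega
    rw [e1, e2]
  calc ∑ t : Fin m, (F t.succ - F t.castSucc) = ∑ t : Fin m, (q (↑t + 1) - q ↑t) :=
        Finset.sum_congr rfl (fun t _ => h1 t)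
    _ = ∑ i ∈ Finset.range m, (q (i + 1) - q i) :=
        Fin.sum_univ_eq_sum_range (fun i => q (i + 1) - q i) m
    _ = q m - q 0 := Finset.sum_range_sub q m
    _ = F (Fin.last m) - F 0 := by
        rw [show q m = F (Fin.last m) from congrArg F (Fin.ext (a := ⟨min m m, hq m⟩) (by simp [Fin.last])),
          show q 0 = F 0 from congrArg F (Fin.ext (a := ⟨min 0 m, hq 0⟩) (by simp))]

/-- Claim 2.15: the total averaged conditional variance of a tuple of bounded
supermartingales along a refining sequence of prefix-free covers is `O(k)(1 + mε₀)`. -/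
theorem variance_sum_bound (k n m : ℕ) (M : Fin k → List Bool → ℝ)
    (hSM : ∀ j, IsSuperM (M j))
    (hbd : ∀ j σ, σ.length ≤ n → M j σ ≤ 2)
    (hroot : ∑ j, M j ([] : List Bool) ≤ 1)
    (ε0 : ℝ) (hε0 : 0 ≤ ε0)
    (havg : 1 - ε0 ≤ (1 / 2 ^ n : ℝ) * ∑ f : Fin n → Bool, ∑ j, M j (List.ofFn f))
    (B : Fin (m + 1) → Finset (List Bool))
    (hlen : ∀ t, ∀ ρ ∈ B t, ρ.length ≤ n)
    (hpf : ∀ t, PrefixFree (B t))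
    (hcover : ∀ t, mea (B t) = 1)
    (hrefine : ∀ t : Fin m, ∀ σ ∈ B t.succ, ∃ ρ ∈ B t.castSucc, ρ <+: σ) :
    ∑ t : Fin m, ∑ ρ ∈ B t.castSucc,
        wt ρ * vVar M ((B t.succ).filter (fun σ => ρ <+: σ)) ≤
      (16 * k : ℝ) * (1 + m * ε0) := by
  -- trivial cases
  rcases Nat.eq_zero_or_pos k with hk0 | hk
  · subst hk0
    simp [vVar]
  rcases Nat.eq_zero_or_pos m with hm0 | hm
  · subst hm0
    simp
  -- abbreviations
  set Q : Fin k → Fin (m + 1) → ℝ := fun j s => ∑ ρ ∈ B s, (M j ρ) ^ 2 * wt ρ with hQdef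
  set A : Fin k → Fin (m + 1) → ℝ := fun j s => ∑ ρ ∈ B s, M j ρ * wt ρ with hAdef
  -- the pieces of `B t.succ` over `ρ ∈ B t.castSucc` are pairwise disjoint
  have hdisj : ∀ t : Fin m, (↑(B t.castSucc) : Set (List Bool)).PairwiseDisjoint
      (fun ρ => (B t.succ).filter (fun σ => ρ <+: σ)) := by
    intro t ρ hρ ρ' hρ' hne
    apply Finset.disjoint_left.2
    intro σ hσ hσ'
    rcases Finset.mem_filter.1 hσ with ⟨_, h1⟩
    rcases Finset.mem_filter.1 hσ' with ⟨_, h2⟩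
    exact hne ((List.prefix_or_prefix_of_prefix h1 h2).elim
      (fun h => hpf _ ρ hρ ρ' hρ' h) (fun h => (hpf _ ρ' hρ' ρ hρ h).symm))
  -- the pieces partition `B t.succ`
  have hpart : ∀ (t : Fin m) (g : List Bool → ℝ),
      ∑ ρ ∈ B t.castSucc, ∑ σ ∈ (B t.succ).filter (fun σ => ρ <+: σ), g σ
        = ∑ σ ∈ B t.succ, g σ := by
    intro t g
    rw [← Finset.sum_biUnion (hdisj t)]
    congr 1
    ext σ
    simp only [Finset.mem_biUnion, Finset.mem_filter]
    constructor
    · rintro ⟨ρ, _, hσ, _⟩; exact hσ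
    · intro hσ
      rcases hrefine t σ hσ with ⟨ρ, hρ, hpre⟩
      exact ⟨ρ, hρ, hσ, hpre⟩
  -- each piece has full measure `wt ρ`
  have hkraftρ : ∀ (t : Fin m), ∀ ρ ∈ B t.castSucc,
      mea ((B t.succ).filter (fun σ => ρ <+: σ)) ≤ wt ρ := by
    intro t ρ hρ
    apply kraft (d := n) ρ _
      (fun σ hσ τ hτ h => hpf t.succ σ (Finset.mem_filter.1 hσ).1 τ (Finset.mem_filter.1 hτ).1 h)
    intro σ hσ
    exact ⟨(Finset.mem_filter.1 hσ).2,
      le_trans (hlen t.succ σ (Finset.mem_filter.1 hσ).1) (Nat.le_add_left n ρ.length)⟩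
  have hmeaρ : ∀ (t : Fin m), ∀ ρ ∈ B t.castSucc,
      mea ((B t.succ).filter (fun σ => ρ <+: σ)) = wt ρ := by
    intro t
    have hsumeq : ∑ ρ ∈ B t.castSucc, mea ((B t.succ).filter (fun σ => ρ <+: σ))
        = ∑ ρ ∈ B t.castSucc, wt ρ := by
      calc ∑ ρ ∈ B t.castSucc, mea ((B t.succ).filter (fun σ => ρ <+: σ))
          = ∑ σ ∈ B t.succ, wt σ := hpart t wt
        _ = 1 := hcover t.succ
        _ = mea (B t.castSucc) := (hcover t.castSucc).symm
        _ = ∑ ρ ∈ B t.castSucc, wt ρ := rfl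
    exact (Finset.sum_eq_sum_iff_of_le (hkraftρ t)).1 hsumeq
  -- supermartingale deficiency on each piece
  have hdef : ∀ (t : Fin m), ∀ ρ ∈ B t.castSucc, ∀ j,
      ∑ σ ∈ (B t.succ).filter (fun σ => ρ <+: σ), M j σ * wt σ ≤ M j ρ * wt ρ := by
    intro t ρ hρ j
    apply superM_sum (M j) (hSM j) n ρ _
      (fun σ hσ τ hτ h => hpf t.succ σ (Finset.mem_filter.1 hσ).1 τ (Finset.mem_filter.1 hτ).1 h)
    intro σ hσ
    exact ⟨(Finset.mem_filter.1 hσ).2,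
      le_trans (hlen t.succ σ (Finset.mem_filter.1 hσ).1) (Nat.le_add_left n ρ.length)⟩
  -- key per-piece variance bound
  have hkey : ∀ (t : Fin m), ∀ ρ ∈ B t.castSucc,
      wt ρ * vVar M ((B t.succ).filter (fun σ => ρ <+: σ)) ≤
        (∑ j, ((∑ σ ∈ (B t.succ).filter (fun σ => ρ <+: σ), (M j σ) ^ 2 * wt σ)
            - (M j ρ) ^ 2 * wt ρ))
          + 4 * ∑ j, (M j ρ * wt ρ - ∑ σ ∈ (B t.succ).filter (fun σ => ρ <+: σ), M j σ * wt σ) := by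
    intro t ρ hρ
    have hmea' := hmeaρ t ρ hρ
    have hw : wt ρ ≠ 0 := (wt_pos ρ).ne'
    have h1 : wt ρ * vVar M ((B t.succ).filter (fun σ => ρ <+: σ)) =
        ∑ j, ∑ σ ∈ (B t.succ).filter (fun σ => ρ <+: σ),
          (M j σ - condE (M j) ((B t.succ).filter (fun σ => ρ <+: σ))) ^ 2 * wt σ := by
      rw [vVar, hmea', mul_div_cancel₀ _ hw]
      simp_rw [Finset.sum_mul]
      exact Finset.sum_comm
    rw [h1, Finset.mul_sum, ← Finset.sum_add_distrib]
    apply Finset.sum_le_sum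
    intro j _
    have hvm := var_min ((B t.succ).filter (fun σ => ρ <+: σ)) (M j) (M j ρ)
      (by rw [hmea']; exact hw)
    have hexp : ∑ σ ∈ (B t.succ).filter (fun σ => ρ <+: σ), (M j σ - M j ρ) ^ 2 * wt σ =
        (∑ σ ∈ (B t.succ).filter (fun σ => ρ <+: σ), (M j σ) ^ 2 * wt σ)
          - 2 * M j ρ * (∑ σ ∈ (B t.succ).filter (fun σ => ρ <+: σ), M j σ * wt σ)
          + (M j ρ) ^ 2 * wt ρ := by
      have h : ∀ σ ∈ (B t.succ).filter (fun σ => ρ <+: σ), (M j σ - M j ρ) ^ 2 * wt σ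
          = (M j σ) ^ 2 * wt σ - (2 * M j ρ) * (M j σ * wt σ) + (M j ρ) ^ 2 * wt σ :=
        fun σ _ => by ring
      rw [Finset.sum_congr rfl h, Finset.sum_add_distrib, Finset.sum_sub_distrib,
        ← Finset.mul_sum, ← Finset.mul_sum,
        show (∑ σ ∈ (B t.succ).filter (fun σ => ρ <+: σ), wt σ) = wt ρ from hmea']
    have hD := hdef t ρ hρ j
    have hb2 := hbd j ρ (hlen t.castSucc ρ hρ)
    have hb0 := (hSM j).1 ρ
    have hwpos := wt_pos ρ
    have hprod : 0 ≤ (2 - M j ρ) *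
        (M j ρ * wt ρ - ∑ σ ∈ (B t.succ).filter (fun σ => ρ <+: σ), M j σ * wt σ) :=
      mul_nonneg (by linarith) (by linarith)
    calc ∑ σ ∈ (B t.succ).filter (fun σ => ρ <+: σ),
          (M j σ - condE (M j) ((B t.succ).filter (fun σ => ρ <+: σ))) ^ 2 * wt σ
        ≤ ∑ σ ∈ (B t.succ).filter (fun σ => ρ <+: σ), (M j σ - M j ρ) ^ 2 * wt σ := hvm
      _ ≤ (∑ σ ∈ (B t.succ).filter (fun σ => ρ <+: σ), (M j σ) ^ 2 * wt σ - (M j ρ) ^ 2 * wt ρ)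
          + 4 * (M j ρ * wt ρ - ∑ σ ∈ (B t.succ).filter (fun σ => ρ <+: σ), M j σ * wt σ) := by
          rw [hexp]
          nlinarith [hprod]
  -- per-step bound in terms of Q and A
  have hT : ∀ t : Fin m,
      ∑ ρ ∈ B t.castSucc, wt ρ * vVar M ((B t.succ).filter (fun σ => ρ <+: σ)) ≤
        (∑ j, (Q j t.succ - Q j t.castSucc)) + 4 * ∑ j, (A j t.castSucc - A j t.succ) := by
    intro t
    refine (Finset.sum_le_sum (hkey t)).trans (le_of_eq ?_)
    rw [Finset.sum_add_distrib]
    congr 1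
    · rw [Finset.sum_comm]
      apply Finset.sum_congr rfl
      intro j _
      rw [Finset.sum_sub_distrib, hpart t (fun σ => (M j σ) ^ 2 * wt σ)]
    · rw [← Finset.mul_sum]
      congr 1
      rw [Finset.sum_comm]
      apply Finset.sum_congr rfl
      intro j _
      rw [Finset.sum_sub_distrib, hpart t (fun σ => M j σ * wt σ)]
  -- telescoping over t
  have htotal : ∑ t : Fin m, ∑ ρ ∈ B t.castSucc,
      wt ρ * vVar M ((B t.succ).filter (fun σ => ρ <+: σ)) ≤
        (∑ j, (Q j (Fin.last m) - Q j 0)) + 4 * ∑ j, (A j 0 - A j (Fin.last m)) := by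
    refine (Finset.sum_le_sum (fun t _ => hT t)).trans (le_of_eq ?_)
    rw [Finset.sum_add_distrib, ← Finset.mul_sum]
    congr 1
    · rw [Finset.sum_comm]
      apply Finset.sum_congr rfl
      intro j _
      exact fin_telescope m (Q j)
    · congr 1
      rw [Finset.sum_comm]
      apply Finset.sum_congr rfl
      intro j _
      calc ∑ t : Fin m, (A j t.castSucc - A j t.succ)
          = -∑ t : Fin m, (A j t.succ - A j t.castSucc) := by
            rw [← Finset.sum_neg_distrib]
            exact Finset.sum_congr rfl (fun t _ => by ring)
        _ = A j 0 - A j (Fin.last m) := by rw [fin_telescope m (A j)]; ring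
  -- endpoint estimates
  have hQ0 : (0:ℝ) ≤ ∑ j, Q j 0 :=
    Finset.sum_nonneg fun j _ => Finset.sum_nonneg fun ρ _ =>
      mul_nonneg (sq_nonneg _) (wt_pos ρ).le
  have hQl : ∑ j, Q j (Fin.last m) ≤ 2 * ∑ j, A j (Fin.last m) := by
    rw [Finset.mul_sum]
    apply Finset.sum_le_sum
    intro j _
    show ∑ ρ ∈ B (Fin.last m), (M j ρ) ^ 2 * wt ρ ≤ 2 * ∑ ρ ∈ B (Fin.last m), M j ρ * wt ρ
    rw [Finset.mul_sum]
    apply Finset.sum_le_sum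
    intro ρ hρ
    have h2 := hbd j ρ (hlen _ ρ hρ)
    have h0 := (hSM j).1 ρ
    have hw := (wt_pos ρ).le
    nlinarith [mul_nonneg (mul_nonneg h0 (by linarith : (0:ℝ) ≤ 2 - M j ρ)) hw]
  have hA0 : ∑ j, A j 0 ≤ 1 := by
    refine le_trans (Finset.sum_le_sum fun j _ => ?_) hroot
    have := superM_sum (M j) (hSM j) n [] (B 0) (hpf 0)
      (fun σ hσ => ⟨List.nil_prefix, by simpa using hlen 0 σ hσ⟩)
    have hw1 : wt ([] : List Bool) = 1 := by simp [wt]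
    rw [hw1, mul_one] at this
    exact this
  have hAl : 1 - ε0 ≤ ∑ j, A j (Fin.last m) := by
    have heq : (1 / 2 ^ n : ℝ) * ∑ f : Fin n → Bool, ∑ j, M j (List.ofFn f)
        = ∑ j, ∑ f : Fin n → Bool, M j (List.ofFn f) * ((2:ℝ)⁻¹) ^ n := by
      rw [Finset.sum_comm, Finset.mul_sum]
      apply Finset.sum_congr rfl
      intro j _
      rw [Finset.mul_sum]
      apply Finset.sum_congr rfl
      intro f _
      rw [one_div, ← inv_pow]
      ring
    rw [heq] at havg
    refine le_trans havg (Finset.sum_le_sum fun j _ => ?_)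
    exact level_bound (M j) (hSM j) n (B (Fin.last m)) (hpf _) (hlen _) (hcover _)
  -- conclude
  have hk1 : (1:ℝ) ≤ k := by exact_mod_cast hk
  have hm1 : (1:ℝ) ≤ m := by exact_mod_cast hm
  rw [Finset.sum_sub_distrib, Finset.sum_sub_distrib] at htotal
  have hme : ε0 ≤ (m:ℝ) * ε0 := by nlinarith
  have hrhs : (2:ℝ) + 2 * ε0 ≤ 16 * k * (1 + m * ε0) := by
    have hnn : (0:ℝ) ≤ 1 + m * ε0 := by nlinarith
    nlinarith [mul_nonneg (sub_nonneg.2 hk1) hnn]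
  linarith [htotal, hQ0, hQl, hA0, hAl, hrhs]



end
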